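/- Let (M,g) be a perfect fluid space-time of dimension n ≥ 4 with R_{kl} = A g_{kl} + B u_k u_l, u^j u_j = −1, and ∇_m C_{jkl}{}^m = 0. Set γ = (n−2)A + B. Then (∇_j + u_j u^k ∇_k)B + B u^m ∇_m u_j = 0. -/
import Mathlib


/-!
STATEMENT 3.  Perfect fluid space-time with divergence-free Weyl tensor
(component-level formalization, same conventions as before).
Conclusion: (∇_j + u_j u^k ∇_k)B + B u^m ∇_m u_j = 0.
-/
theorem perfectFluid_gradient_B
    (n : ℕ) (hn : 4 ≤ n) (M : Type*)
    (g ginv : M → Fin n → Fin n → ℝ)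
    (A B : M → ℝ) (DA DB : M → Fin n → ℝ)
    (u : M → Fin n → ℝ) (Du : M → Fin n → Fin n → ℝ)
    (hg : ∀ x i j, g x i j = g x j i)
    (hginv : ∀ x i j, ∑ m, ginv x i m * g x m j = if i = j then (1:ℝ) else 0)
    (hginvsymm : ∀ x i j, ginv x i j = ginv x j i)
    -- u is a unit timelike vector field: u^j u_j = -1
    (hunit : ∀ x, ∑ i, ∑ j, ginv x i j * u x i * u x j = -1)
    -- u has constant length, hence u^l ∇_k u_l = 0
    (hDu : ∀ x k, ∑ l, ∑ m, ginv x l m * u x m * Du x k l = 0)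
    -- contracted Bianchi identity ∇^m R_{jm} = (1/2)∇_j R
    (hBianchi : ∀ x j, ∑ a, ∑ m, ginv x a m *
        (DA x a * g x m j + DB x a * u x m * u x j
          + B x * (Du x a m * u x j + u x m * Du x a j))
      = (1/2) * ((n:ℝ) * DA x j - DB x j))
    -- ∇_m C_{jkl}{}^m = 0, in its equivalent Codazzi form for the Ricci tensor
    (hWeyl : ∀ x k l j,
        (DA x k * g x j l + DB x k * u x j * u x l
          + B x * (Du x k j * u x l + u x j * Du x k l))
        - (DA x l * g x j k + DB x l * u x j * u x k
          + B x * (Du x l j * u x k + u x j * Du x l k))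
      = (1/(2*((n:ℝ) - 1))) * (g x j l * ((n:ℝ) * DA x k - DB x k)
          - g x j k * ((n:ℝ) * DA x l - DB x l))) :
    -- conclusion: (∇_j + u_j u^k∇_k)B + B u^m∇_m u_j = 0
    ∀ x j, DB x j + u x j * (∑ k, ∑ m, ginv x k m * u x m * DB x k)
      + B x * (∑ k, ∑ m, ginv x k m * u x m * Du x k j) = 0 := by
  intro x j
  have hN4 : (4:ℝ) ≤ (n:ℝ) := by exact_mod_cast hn
  have hN1 : ((n:ℝ) - 1) ≠ 0 := ne_of_gt (by linarith)
  have hN2 : ((n:ℝ) - 2) ≠ 0 := ne_of_gt (by linarith)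
  set U : Fin n → ℝ := fun k => ∑ m, ginv x k m * u x m with hUdef
  -- contraction of U with the metric gives back u
  have rg : ∀ l, (∑ i, U i * g x i l) = u x l := by
    intro l
    calc (∑ i, U i * g x i l) = ∑ i, ∑ m, ginv x i m * u x m * g x i l := by
          refine Finset.sum_congr rfl fun i _ => ?_
          simp only [hUdef]
          rw [Finset.sum_mul]
      _ = ∑ m, ∑ i, ginv x i m * u x m * g x i l := Finset.sum_comm
      _ = ∑ m, u x m * ∑ i, ginv x m i * g x i l := by
          refine Finset.sum_congr rfl fun m _ => ?_
          rw [Finset.mul_sum]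
          refine Finset.sum_congr rfl fun i _ => ?_
          rw [hginvsymm x i m]; ring
      _ = ∑ m, u x m * (if m = l then 1 else 0) := by
          refine Finset.sum_congr rfl fun m _ => ?_
          rw [hginv]
      _ = u x l := by simp
  -- unit norm
  have r2 : (∑ i, U i * u x i) = -1 := by
    have h := hunit x
    calc (∑ i, U i * u x i) = ∑ i, ∑ m, ginv x i m * u x i * u x m := by
          refine Finset.sum_congr rfl fun i _ => ?_
          simp only [hUdef]
          rw [Finset.sum_mul]
          exact Finset.sum_congr rfl fun m _ => by ring
      _ = -1 := h
  -- u^l ∇_k u_l = 0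
  have rDu : ∀ l, (∑ i, U i * Du x l i) = 0 := by
    intro l
    have h := hDu x l
    calc (∑ i, U i * Du x l i) = ∑ i, ∑ m, ginv x i m * u x m * Du x l i := by
          refine Finset.sum_congr rfl fun i _ => ?_
          simp only [hUdef]
          rw [Finset.sum_mul]
      _ = 0 := h
  set a : ℝ := ∑ k, U k * DA x k with hadef
  set b : ℝ := ∑ k, U k * DB x k with hbdef
  set θ : ℝ := ∑ k, ∑ m, ginv x k m * Du x k m with hθdef
  set P : Fin n → ℝ := fun j => ∑ k, U k * Du x k j with hPdef
  have hUP : (∑ i, U i * P i) = 0 := by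
    calc (∑ i, U i * P i) = ∑ i, ∑ k, U k * (U i * Du x k i) := by
          refine Finset.sum_congr rfl fun i _ => ?_
          simp only [hPdef]
          rw [Finset.mul_sum]
          exact Finset.sum_congr rfl fun k _ => by ring
      _ = ∑ k, ∑ i, U k * (U i * Du x k i) := Finset.sum_comm
      _ = ∑ k, U k * ∑ i, U i * Du x k i := by
          refine Finset.sum_congr rfl fun k _ => ?_
          rw [Finset.mul_sum]
      _ = 0 := by simp [rDu]
  -- STAR : contracted Bianchi, simplified
  have star : ∀ p, DA x p + b * u x p + B x * θ * u x p + B x * P p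
      = (1/2) * ((n:ℝ) * DA x p - DB x p) := by
    intro p
    have h := hBianchi x p
    have lhs_eq : (∑ i, ∑ m, ginv x i m *
        (DA x i * g x m p + DB x i * u x m * u x p
          + B x * (Du x i m * u x p + u x m * Du x i p)))
        = DA x p + b * u x p + B x * θ * u x p + B x * P p := by
      have step1 : (∑ i, ∑ m, ginv x i m *
          (DA x i * g x m p + DB x i * u x m * u x p
            + B x * (Du x i m * u x p + u x m * Du x i p)))
          = ∑ i, (DA x i * (∑ m, ginv x i m * g x m p)
              + (DB x i * u x p) * U i
              + (B x * u x p) * (∑ m, ginv x i m * Du x i m)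
              + (B x * Du x i p) * U i) := by
        refine Finset.sum_congr rfl fun i _ => ?_
        simp only [hUdef, Finset.mul_sum]
        rw [← Finset.sum_add_distrib, ← Finset.sum_add_distrib, ← Finset.sum_add_distrib]
        exact Finset.sum_congr rfl fun m _ => by ring
      rw [step1]
      have step2 : ∀ i : Fin n, DA x i * (∑ m, ginv x i m * g x m p)
          = DA x i * (if i = p then (1:ℝ) else 0) := fun i => by rw [hginv]
      calc (∑ i, (DA x i * (∑ m, ginv x i m * g x m p)
              + (DB x i * u x p) * U i
              + (B x * u x p) * (∑ m, ginv x i m * Du x i m)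
              + (B x * Du x i p) * U i))
          = (∑ i, DA x i * (if i = p then (1:ℝ) else 0))
            + (∑ i, (DB x i * u x p) * U i)
            + (∑ i, (B x * u x p) * (∑ m, ginv x i m * Du x i m))
            + (∑ i, (B x * Du x i p) * U i) := by
            rw [Finset.sum_add_distrib, Finset.sum_add_distrib, Finset.sum_add_distrib]
            congr 3
            exact Finset.sum_congr rfl fun i _ => step2 i
        _ = DA x p + b * u x p + B x * θ * u x p + B x * P p := by
            congr 1
            congr 1
            congr 1
            · simp
            · rw [hbdef, Finset.sum_mul]
              exact Finset.sum_congr rfl fun i _ => by ring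
            · rw [show B x * θ * u x p = (B x * u x p) * θ from by ring, hθdef,
                Finset.mul_sum]
            · rw [hPdef]
              show (∑ i, (B x * Du x i p) * U i) = B x * ∑ k, U k * Du x k p
              rw [Finset.mul_sum]
              exact Finset.sum_congr rfl fun i _ => by ring
    rw [lhs_eq] at h
    exact h
  -- I : contract star with U
  have Ieq : a - b - B x * θ = (1/2) * ((n:ℝ) * a - b) := by
    have h : (∑ i, U i * (DA x i + b * u x i + B x * θ * u x i + B x * P i))
        = ∑ i, U i * ((1/2) * ((n:ℝ) * DA x i - DB x i)) := by
      exact Finset.sum_congr rfl fun i _ => by rw [star i]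
    have hL : (∑ i, U i * (DA x i + b * u x i + B x * θ * u x i + B x * P i))
        = a - b - B x * θ := by
      calc (∑ i, U i * (DA x i + b * u x i + B x * θ * u x i + B x * P i))
          = ∑ i, (U i * DA x i + b * (U i * u x i) + (B x * θ) * (U i * u x i)
              + B x * (U i * P i)) := Finset.sum_congr rfl fun i _ => by ring
        _ = (∑ i, U i * DA x i) + b * (∑ i, U i * u x i)
            + (B x * θ) * (∑ i, U i * u x i) + B x * (∑ i, U i * P i) := by
            simp only [Finset.sum_add_distrib, ← Finset.mul_sum]
        _ = a - b - B x * θ := by rw [← hadef, r2, hUP]; ring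
    have hR : (∑ i, U i * ((1/2) * ((n:ℝ) * DA x i - DB x i)))
        = (1/2) * ((n:ℝ) * a - b) := by
      calc (∑ i, U i * ((1/2) * ((n:ℝ) * DA x i - DB x i)))
          = ∑ i, (((n:ℝ)/2) * (U i * DA x i) - (1/2) * (U i * DB x i)) :=
            Finset.sum_congr rfl fun i _ => by ring
        _ = ((n:ℝ)/2) * (∑ i, U i * DA x i) - (1/2) * (∑ i, U i * DB x i) := by
            simp only [Finset.sum_sub_distrib, ← Finset.mul_sum]
        _ = (1/2) * ((n:ℝ) * a - b) := by rw [← hadef, ← hbdef]; ring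
    rw [hL, hR] at h
    exact h
  -- II : double contraction of the Weyl condition with U
  have II : -(DA x j - DB x j) - a * u x j + b * u x j + B x * P j
      = (1/(2*((n:ℝ) - 1))) * (-((n:ℝ) * DA x j - DB x j) - u x j * ((n:ℝ) * a - b)) := by
    have hsum : (∑ l, U l * ∑ i, U i *
        ((DA x j * g x i l + DB x j * u x i * u x l
          + B x * (Du x j i * u x l + u x i * Du x j l))
        - (DA x l * g x i j + DB x l * u x i * u x j
          + B x * (Du x l i * u x j + u x i * Du x l j))))
        = ∑ l, U l * ∑ i, U i *
          ((1/(2*((n:ℝ) - 1))) * (g x i l * ((n:ℝ) * DA x j - DB x j)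
            - g x i j * ((n:ℝ) * DA x l - DB x l))) := by
      refine Finset.sum_congr rfl fun l _ => ?_
      congr 1
      refine Finset.sum_congr rfl fun i _ => ?_
      rw [hWeyl x j l i]
    have innerL : ∀ l, (∑ i, U i *
        ((DA x j * g x i l + DB x j * u x i * u x l
          + B x * (Du x j i * u x l + u x i * Du x j l))
        - (DA x l * g x i j + DB x l * u x i * u x j
          + B x * (Du x l i * u x j + u x i * Du x l j))))
        = (DA x j - DB x j) * u x l - B x * Du x j l
          - DA x l * u x j + DB x l * u x j + B x * Du x l j := by
      intro l
      calc _ = ∑ i, (DA x j * (U i * g x i l)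
            + (DB x j * u x l + B x * Du x j l - DB x l * u x j - B x * Du x l j)
              * (U i * u x i)
            + (B x * u x l) * (U i * Du x j i)
            + (-(DA x l)) * (U i * g x i j)
            + (-(B x * u x j)) * (U i * Du x l i)) :=
          Finset.sum_congr rfl fun i _ => by ring
        _ = DA x j * (∑ i, U i * g x i l)
            + (DB x j * u x l + B x * Du x j l - DB x l * u x j - B x * Du x l j)
              * (∑ i, U i * u x i)
            + (B x * u x l) * (∑ i, U i * Du x j i)
            + (-(DA x l)) * (∑ i, U i * g x i j)
            + (-(B x * u x j)) * (∑ i, U i * Du x l i) := by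
            simp only [Finset.sum_add_distrib, ← Finset.mul_sum]
        _ = _ := by rw [rg l, rg j, r2, rDu j, rDu l]; ring
    have innerR : ∀ l, (∑ i, U i *
        ((1/(2*((n:ℝ) - 1))) * (g x i l * ((n:ℝ) * DA x j - DB x j)
          - g x i j * ((n:ℝ) * DA x l - DB x l))))
        = (1/(2*((n:ℝ) - 1))) * (u x l * ((n:ℝ) * DA x j - DB x j)
          - u x j * ((n:ℝ) * DA x l - DB x l)) := by
      intro l
      calc _ = ∑ i, (((1/(2*((n:ℝ) - 1))) * ((n:ℝ) * DA x j - DB x j)) * (U i * g x i l)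
            + (-((1/(2*((n:ℝ) - 1))) * ((n:ℝ) * DA x l - DB x l))) * (U i * g x i j)) :=
          Finset.sum_congr rfl fun i _ => by ring
        _ = ((1/(2*((n:ℝ) - 1))) * ((n:ℝ) * DA x j - DB x j)) * (∑ i, U i * g x i l)
            + (-((1/(2*((n:ℝ) - 1))) * ((n:ℝ) * DA x l - DB x l))) * (∑ i, U i * g x i j) := by
            simp only [Finset.sum_add_distrib, ← Finset.mul_sum]
        _ = _ := by rw [rg l, rg j]; ring
    simp only [innerL, innerR] at hsum
    have hLout : (∑ l, U l * ((DA x j - DB x j) * u x l - B x * Du x j l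
          - DA x l * u x j + DB x l * u x j + B x * Du x l j))
        = -(DA x j - DB x j) - a * u x j + b * u x j + B x * P j := by
      calc _ = ∑ l, ((DA x j - DB x j) * (U l * u x l)
            + (-(B x)) * (U l * Du x j l)
            + (-(u x j)) * (U l * DA x l)
            + (u x j) * (U l * DB x l)
            + (B x) * (U l * Du x l j)) :=
          Finset.sum_congr rfl fun l _ => by ring
        _ = (DA x j - DB x j) * (∑ l, U l * u x l)
            + (-(B x)) * (∑ l, U l * Du x j l)
            + (-(u x j)) * (∑ l, U l * DA x l)
            + (u x j) * (∑ l, U l * DB x l)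
            + (B x) * (∑ l, U l * Du x l j) := by
            simp only [Finset.sum_add_distrib, ← Finset.mul_sum]
        _ = _ := by
            rw [r2, rDu j, ← hadef, ← hbdef]
            have : (∑ l, U l * Du x l j) = P j := by rw [hPdef]
            rw [this]; ring
    have hRout : (∑ l, U l * ((1/(2*((n:ℝ) - 1))) * (u x l * ((n:ℝ) * DA x j - DB x j)
          - u x j * ((n:ℝ) * DA x l - DB x l))))
        = (1/(2*((n:ℝ) - 1))) * (-((n:ℝ) * DA x j - DB x j) - u x j * ((n:ℝ) * a - b)) := by
      calc _ = ∑ l, (((1/(2*((n:ℝ) - 1))) * ((n:ℝ) * DA x j - DB x j)) * (U l * u x l)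
            + (-((1/(2*((n:ℝ) - 1))) * u x j * (n:ℝ))) * (U l * DA x l)
            + ((1/(2*((n:ℝ) - 1))) * u x j) * (U l * DB x l)) :=
          Finset.sum_congr rfl fun l _ => by ring
        _ = ((1/(2*((n:ℝ) - 1))) * ((n:ℝ) * DA x j - DB x j)) * (∑ l, U l * u x l)
            + (-((1/(2*((n:ℝ) - 1))) * u x j * (n:ℝ))) * (∑ l, U l * DA x l)
            + ((1/(2*((n:ℝ) - 1))) * u x j) * (∑ l, U l * DB x l) := by
            simp only [Finset.sum_add_distrib, ← Finset.mul_sum]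
        _ = _ := by rw [r2, ← hadef, ← hbdef]; ring
    rw [hLout, hRout] at hsum
    exact hsum
  -- clear the denominator in II
  have II' : 2*((n:ℝ) - 1) * (-(DA x j - DB x j) - a * u x j + b * u x j + B x * P j)
      = -((n:ℝ) * DA x j - DB x j) - u x j * ((n:ℝ) * a - b) := by
    rw [II]
    field_simp
  -- key linear combination
  have key : ((n:ℝ) - 2) * (DB x j + b * u x j + B x * P j) = 0 := by
    linear_combination (-1 : ℝ) * star j - u x j * Ieq + (1/2) * II'
  have hzero : DB x j + b * u x j + B x * P j = 0 := by
    rcases mul_eq_zero.mp key with h | h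
    · exact absurd h hN2
    · exact h
  have hb' : (∑ k, ∑ m, ginv x k m * u x m * DB x k) = b := by
    rw [hbdef]
    refine Finset.sum_congr rfl fun k _ => ?_
    simp only [hUdef]
    rw [Finset.sum_mul]
  have hP' : (∑ k, ∑ m, ginv x k m * u x m * Du x k j) = P j := by
    rw [hPdef]
    refine Finset.sum_congr rfl fun k _ => ?_
    simp only [hUdef]
    rw [Finset.sum_mul]
  rw [hb', hP']
  linarith [hzero]
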